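/- Let f : X → ℝ be differentiable, monotone, and DR-submodular on a box X ⊆ ℝ₊ⁿ. Then for any x, y ∈ X, f(y ∨ x) - f(x) ≤ ⟨∇f(x), (y - x) ∨ 0⟩, where ∨ denotes componentwise maximum. -/

import Mathlib

open RealInnerProductSpace

/-- For monotone DR-submodular `f`: `f(y ∨ x) - f(x) ≤ ⟨∇f(x), (y - x) ∨ 0⟩`. -/
theorem drSubmodular_sup_inequality
    {n : ℕ} (b : EuclideanSpace ℝ (Fin n)) (hb : ∀ i, 0 ≤ b i)
    (X : Set (EuclideanSpace ℝ (Fin n)))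
    (hX : X = {y : EuclideanSpace ℝ (Fin n) | ∀ i, y i ∈ Set.Icc 0 (b i)})
    (f : EuclideanSpace ℝ (Fin n) → ℝ)
    (hf : Differentiable ℝ f)
    (hmono : ∀ x ∈ X, ∀ y ∈ X, (∀ i, x i ≤ y i) → f x ≤ f y)
    (hDR : ∀ x ∈ X, ∀ y ∈ X, (∀ i, x i ≤ y i) →
      ∀ i, gradient f y i ≤ gradient f x i) :
    ∀ x ∈ X, ∀ y ∈ X,
      f ((WithLp.toLp 2 (fun i => max (y i) (x i)) : EuclideanSpace ℝ (Fin n))) - f x ≤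
        ⟪gradient f x, (WithLp.toLp 2 (fun i => max (y i - x i) 0) : EuclideanSpace ℝ (Fin n))⟫ := by
  intro x hx y hy
  subst hX
  set v : EuclideanSpace ℝ (Fin n) := WithLp.toLp 2 (fun i => max (y i - x i) 0) with hv
  have hv0 : ∀ i, 0 ≤ v i := fun i => le_max_right _ _
  have hxv : x + v = (WithLp.toLp 2 (fun i => max (y i) (x i)) : EuclideanSpace ℝ (Fin n)) := by
    ext i
    simp only [PiLp.add_apply, hv, PiLp.toLp_apply]
    rcases le_total (x i) (y i) with h | h
    · rw [max_eq_left (by linarith), max_eq_left h]; ring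
    · rw [max_eq_right (by linarith), max_eq_right h]; ring
  have hmem : ∀ t ∈ Set.Icc (0:ℝ) 1, x + t • v ∈
      {z : EuclideanSpace ℝ (Fin n) | ∀ i, z i ∈ Set.Icc 0 (b i)} := by
    intro t ht i
    have hxi := hx i
    have hyi := hy i
    simp only [Set.mem_Icc] at hxi hyi ⊢
    simp only [PiLp.add_apply, PiLp.smul_apply, smul_eq_mul]
    constructor
    · nlinarith [hv0 i, ht.1]
    · have hvle : v i ≤ max (y i) (x i) - x i := by
        simp only [hv, PiLp.toLp_apply]
        rcases le_total (x i) (y i) with h | h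
        · rw [max_eq_left (by linarith), max_eq_left h]
        · rw [max_eq_right (by linarith), max_eq_right h]; linarith
      have hmax : max (y i) (x i) ≤ b i := max_le hyi.2 hxi.2
      nlinarith [hv0 i, ht.1, ht.2]
  have key : ∀ t : ℝ, HasDerivAt (fun t : ℝ => f (x + t • v))
      ⟪gradient f (x + t • v), v⟫ t := by
    intro t
    have h1 : HasDerivAt (fun t : ℝ => x + t • v) v t := by
      simpa using ((hasDerivAt_id t).smul_const v).const_add x
    have h2 : HasGradientAt f (gradient f (x + t • v)) (x + t • v) :=
      (hf (x + t • v)).hasGradientAt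
    have := h2.hasFDerivAt.comp_hasDerivAt t h1
    exact this
  obtain ⟨c, hc, hceq⟩ := exists_hasDerivAt_eq_slope (fun t : ℝ => f (x + t • v))
    (fun t => ⟪gradient f (x + t • v), v⟫) one_pos
    (fun t _ => (key t).continuousAt.continuousWithinAt)
    (fun t _ => key t)
  have hxmem : x ∈ {z : EuclideanSpace ℝ (Fin n) | ∀ i, z i ∈ Set.Icc 0 (b i)} := hx
  have hcv : x + c • v ∈ {z : EuclideanSpace ℝ (Fin n) | ∀ i, z i ∈ Set.Icc 0 (b i)} :=
    hmem c ⟨hc.1.le, hc.2.le⟩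
  have hle : ∀ i, x i ≤ (x + c • v) i := by
    intro i
    simp only [PiLp.add_apply, PiLp.smul_apply, smul_eq_mul]
    nlinarith [hv0 i, hc.1]
  have hgrad := hDR x hx (x + c • v) hcv hle
  have hfin : ⟪gradient f (x + c • v), v⟫ ≤ ⟪gradient f x, v⟫ := by
    simp only [PiLp.inner_apply, RCLike.inner_apply, starRingEnd_apply, star_trivial]
    exact Finset.sum_le_sum fun i _ => mul_le_mul_of_nonneg_left (hgrad i) (hv0 i)
  have hslope : f ((WithLp.toLp 2 (fun i => max (y i) (x i)) : EuclideanSpace ℝ (Fin n))) - f x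
      = ⟪gradient f (x + c • v), v⟫ := by
    rw [← hxv]
    have : (fun t : ℝ => f (x + t • v)) 1 - (fun t : ℝ => f (x + t • v)) 0
        = ⟪gradient f (x + c • v), v⟫ := by
      rw [hceq]; simp [slope]
    simpa using this
  rw [hslope]
  exact hfin
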